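/- Let q ∈ (0,1), let x be a trajectory solution of (MTRIGS), λ > 0, r ∈ [q,1) and z ∈ H. With f_{t,i}(u) := f_i(u) + (β/(2t^p))‖u‖², define μ_r(t) := λ/t^r − 2r/t and E(t) := t^{2r}·min_{i=1,…,m}(f_{t,i}(x(t)) − f_{t,i}(z)) + (1/2)‖λ(x(t) − z) + t^r ẋ(t)‖² + (λ/2)(r t^{r−1} + α t^{r−q} − 2λ)‖x(t) − z‖². Then E is differentiable almost everywhere and, for almost every t ≥ t₁ := max((2r/λ)^{1/(1−r)}, t₀): E'(t) + μ_r(t)·E(t) ≤ t^r((3/2)λ − α t^{r−q})‖ẋ(t)‖² + (pβ t^{2r}/(2t^{p+1}))‖z‖² + (λ/2)(3λr/t − λ²/t^r + λα/t^q − β/t^{p−r})‖x(t) − z‖². -/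

import Mathlib

open Filter Topology MeasureTheory
open scoped NNReal InnerProductSpace


/-- A set of reals, all of whose points are isolated (w.r.t. the set), is countable. -/
lemma aux_countable_isolated {S : Set ℝ} (h : ∀ t ∈ S, ∀ᶠ s in 𝓝[≠] t, s ∉ S) :
    S.Countable := by
  have hd : DiscreteTopology S := by
    rw [discreteTopology_subtype_iff]
    intro x hx
    rw [← Filter.empty_mem_iff_bot]
    have h1 : {s | s ∉ S} ∈ 𝓝[≠] x ⊓ Filter.principal S := Filter.mem_inf_of_left (h x hx)
    have h2 : S ∈ 𝓝[≠] x ⊓ Filter.principal S :=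
      Filter.mem_inf_of_right (Filter.mem_principal_self S)
    have h3 := Filter.inter_mem h1 h2
    have he : {s | s ∉ S} ∩ S = ∅ := by ext s; simp
    rwa [he] at h3
  haveI : LindelofSpace ↥S := inferInstance
  exact Set.countable_coe_iff.mp countable_of_Lindelof_of_discrete

/-- Zeros of a function with nonzero derivative form a countable set. -/
lemma aux_countable_zero_deriv {u d : ℝ → ℝ} {A : Set ℝ}
    (hu : ∀ t ∈ A, HasDerivAt u (d t) t) :
    {t | t ∈ A ∧ u t = 0 ∧ d t ≠ 0}.Countable := by
  apply aux_countable_isolated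
  rintro t ⟨htA, hu0, hd0⟩
  have hs := hasDerivAt_iff_tendsto_slope.1 (hu t htA)
  have hev : ∀ᶠ s in 𝓝[≠] t, slope u t s ≠ 0 := hs.eventually_ne hd0
  filter_upwards [hev, self_mem_nhdsWithin] with s hslope hsne
  rintro ⟨-, hus, -⟩
  apply hslope
  rw [slope_def_field, hus, hu0]
  simp

/-- For a nonempty finite family, the infimum is attained. -/
lemma aux_exists_ciInf {m : ℕ} (hm : 0 < m) (h : Fin m → ℝ) : ∃ i, h i = ⨅ j, h j := by
  haveI : Nonempty (Fin m) := Fin.pos_iff_nonempty.1 hm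
  obtain ⟨i, -, hi⟩ := Finset.exists_mem_eq_inf' (Finset.univ_nonempty (α := Fin m)) h
  refine ⟨i, le_antisymm (le_ciInf fun j => ?_)
    (ciInf_le (Set.Finite.bddBelow (Set.finite_range h)) i)⟩
  rw [← hi]
  exact Finset.inf'_le _ (Finset.mem_univ j)

lemma aux_abs_inf'_sub {m : ℕ} (A : Finset (Fin m)) (hAne : A.Nonempty) (F G : Fin m → ℝ) :
    |A.inf' hAne F - A.inf' hAne G| ≤ ∑ j ∈ A, |F j - G j| := by
  rw [abs_le]
  obtain ⟨ja, hja, hja'⟩ := Finset.exists_mem_eq_inf' hAne F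
  obtain ⟨jb, hjb, hjb'⟩ := Finset.exists_mem_eq_inf' hAne G
  constructor
  · have h1 : A.inf' hAne G - A.inf' hAne F ≤ G ja - F ja := by
      rw [hja']
      exact sub_le_sub_right (Finset.inf'_le _ hja) _
    have h2 : G ja - F ja ≤ |F ja - G ja| := by rw [abs_sub_comm]; exact le_abs_self _
    have h3 : |F ja - G ja| ≤ ∑ j ∈ A, |F j - G j| :=
      Finset.single_le_sum (f := fun j => |F j - G j|) (fun j _ => abs_nonneg _) hja
    linarith
  · have h1 : A.inf' hAne F - A.inf' hAne G ≤ F jb - G jb := by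
      rw [hjb']
      exact sub_le_sub_right (Finset.inf'_le _ hjb) _
    have h3 : |F jb - G jb| ≤ ∑ j ∈ A, |F j - G j| :=
      Finset.single_le_sum (f := fun j => |F j - G j|) (fun j _ => abs_nonneg _) hjb
    have h2 : F jb - G jb ≤ |F jb - G jb| := le_abs_self _
    linarith

/-- If all active indices of a finite min of functions differentiable at `t` share the same
derivative, then the min is differentiable at `t` with that derivative. -/
lemma aux_min_hasDerivAt {m : ℕ} (hm : 0 < m) (g : Fin m → ℝ → ℝ) (d : Fin m → ℝ)
    (t : ℝ) (hg : ∀ i, HasDerivAt (g i) (d i) t) (D : ℝ)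
    (hD : ∀ i, g i t = (⨅ j, g j t) → d i = D) :
    HasDerivAt (fun s => ⨅ j, g j s) D t := by
  haveI : Nonempty (Fin m) := Fin.pos_iff_nonempty.1 hm
  have hne : (Finset.univ : Finset (Fin m)).Nonempty := Finset.univ_nonempty
  have key : ∀ (h : Fin m → ℝ), (⨅ j, h j) = Finset.univ.inf' hne h := by
    intro h
    obtain ⟨i', -, hi'⟩ := Finset.exists_mem_eq_inf' hne h
    apply le_antisymm
    · rw [hi']
      exact ciInf_le (Set.Finite.bddBelow (Set.finite_range h)) i'
    · exact le_ciInf fun j => Finset.inf'_le _ (Finset.mem_univ j)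
  classical
  set A : Finset (Fin m) := Finset.univ.filter (fun i => g i t = ⨅ j, g j t) with hAdef
  obtain ⟨i₀, hi₀⟩ := aux_exists_ciInf hm (fun i => g i t)
  have hmemA : ∀ i, i ∈ A ↔ g i t = ⨅ j, g j t := by
    intro i; simp [hAdef]
  have hAne : A.Nonempty := ⟨i₀, (hmemA i₀).2 hi₀⟩
  -- eventually, indices outside `A` lie strictly above the active index i₀
  have hev : ∀ᶠ s in 𝓝 t, ∀ i, i ∉ A → g i₀ s < g i s := by
    rw [eventually_all]
    intro i
    by_cases hiA : i ∈ A
    · exact Filter.Eventually.of_forall fun s h => absurd hiA h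
    · have hlt : g i₀ t < g i t := by
        have h1 : (⨅ j, g j t) ≤ g i t :=
          ciInf_le (Set.Finite.bddBelow (Set.finite_range _)) i
        have h2 : g i t ≠ ⨅ j, g j t := by rwa [hmemA] at hiA
        rw [hi₀]
        exact lt_of_le_of_ne h1 (Ne.symm h2)
      filter_upwards [(hg i₀).continuousAt.eventually_lt (hg i).continuousAt hlt] with s hs
      exact fun _ => hs
  -- eventually the full min equals the min over the active set
  have hinfeq : ∀ᶠ s in 𝓝 t, (⨅ j, g j s) = A.inf' hAne (fun j => g j s) := by
    filter_upwards [hev] with s hs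
    rw [key (fun j => g j s)]
    apply le_antisymm
    · exact Finset.le_inf' _ _ fun b hb => Finset.inf'_le _ (Finset.mem_univ b)
    · apply Finset.le_inf'
      intro b _
      by_cases hbA : b ∈ A
      · exact Finset.inf'_le _ hbA
      · exact le_of_lt (lt_of_le_of_lt (Finset.inf'_le _ ((hmemA i₀).2 hi₀)) (hs b hbA))
  -- the little-o estimate
  rw [hasDerivAt_iff_isLittleO]
  have base : ∀ j ∈ A, (fun s => |g j s - g j t - (s - t) * D|) =o[𝓝 t] (fun s => s - t) := by
    intro j hj
    have hder := hasDerivAt_iff_isLittleO.1 (hg j)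
    rw [hD j ((hmemA j).1 hj)] at hder
    exact (hder.congr_left (fun s => by rw [smul_eq_mul])).abs_left
  have sum_o : (fun s => ∑ j ∈ A, |g j s - g j t - (s - t) * D|) =o[𝓝 t] (fun s => s - t) :=
    Asymptotics.IsLittleO.fun_sum base
  have big : (fun s => (⨅ j, g j s) - (⨅ j, g j t) - (s - t) • D) =O[𝓝 t]
      (fun s => ∑ j ∈ A, |g j s - g j t - (s - t) * D|) := by
    rw [Asymptotics.isBigO_iff]
    refine ⟨1, ?_⟩
    filter_upwards [hinfeq] with s hs
    have habs : |(⨅ j, g j s) - (⨅ j, g j t) - (s - t) * D| ≤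
        ∑ j ∈ A, |g j s - g j t - (s - t) * D| := by
      have hB : (⨅ j, g j t) + (s - t) * D = A.inf' hAne (fun j => g j t + (s - t) * D) := by
        have heqc : A.inf' hAne (fun j => g j t + (s - t) * D) =
            A.inf' hAne (fun _ => (⨅ j, g j t) + (s - t) * D) :=
          Finset.inf'_congr hAne rfl (fun i hi => by rw [(hmemA i).1 hi])
        rw [heqc, Finset.inf'_const]
      rw [hs, sub_sub, hB]
      calc |A.inf' hAne (fun j => g j s) - A.inf' hAne (fun j => g j t + (s - t) * D)| ≤
          ∑ j ∈ A, |g j s - (g j t + (s - t) * D)| := aux_abs_inf'_sub A hAne _ _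
        _ = ∑ j ∈ A, |g j s - g j t - (s - t) * D| := by
            apply Finset.sum_congr rfl
            intro j _
            congr 1
            ring
    rw [one_mul, Real.norm_eq_abs, Real.norm_eq_abs, smul_eq_mul]
    calc |(⨅ j, g j s) - (⨅ j, g j t) - (s - t) * D| ≤
        (∑ j ∈ A, |g j s - g j t - (s - t) * D|) := habs
      _ ≤ abs (∑ j ∈ A, |g j s - g j t - (s - t) * D|) := le_abs_self _
  exact big.trans_isLittleO sum_o


section
variable {H : Type*} [NormedAddCommGroup H] [InnerProductSpace ℝ H] [CompleteSpace H]

/-- Gradient inequality for convex differentiable functions. -/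
lemma aux_grad_convex {f : H → ℝ} (hc : ConvexOn ℝ Set.univ f) (hd : Differentiable ℝ f)
    (x z : H) : f x + ⟪gradient f x, z - x⟫_ℝ ≤ f z := by
  set c : ℝ → H := fun s => x + s • (z - x) with hcdef
  have hφconv : ConvexOn ℝ Set.univ (fun s : ℝ => f (c s)) := by
    have h1 := hc.comp_affineMap (AffineMap.lineMap x z)
    have h2 : (AffineMap.lineMap x z : ℝ →ᵃ[ℝ] H) ⁻¹' Set.univ = Set.univ := by simp
    rw [h2] at h1
    suffices hfun : (fun s : ℝ => f (c s)) = f ∘ AffineMap.lineMap x z by rw [hfun]; exact h1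
    funext s
    simp [hcdef, AffineMap.lineMap_apply, Function.comp]
    congr 1
    abel
  have hcder : HasDerivAt c (z - x) 0 := by
    have h1 : HasDerivAt (fun s : ℝ => s • (z - x)) ((1 : ℝ) • (z - x)) 0 :=
      (hasDerivAt_id 0).smul_const (z - x)
    simpa [hcdef] using h1.const_add x
  have hφd : HasDerivAt (fun s : ℝ => f (c s)) ⟪gradient f x, z - x⟫_ℝ 0 := by
    have hg := ((hd x).hasGradientAt).hasFDerivAt
    have hc0 : c 0 = x := by simp [hcdef]
    rw [← hc0] at hg
    have := hg.comp_hasDerivAt 0 hcder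
    rw [hc0] at this
    exact this
  have hs := hφconv.le_slope_of_hasDerivAt (Set.mem_univ 0) (Set.mem_univ 1) one_pos hφd
  rw [slope_def_field] at hs
  have hc1 : c 1 = z := by simp [hcdef]
  have hc0 : c 0 = x := by simp [hcdef]
  rw [hc1, hc0] at hs
  simp at hs ⊢
  linarith

/-- The minimal norm element of a convex set acts like a projection of the origin. -/
lemma aux_proj {K : Set H} (hK : Convex ℝ K) {v : H} (hv : v ∈ K)
    (hmin : ∀ w ∈ K, ‖v‖ ≤ ‖w‖) : ∀ w ∈ K, 0 ≤ ⟪v, w - v⟫_ℝ := by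
  intro w hw
  by_contra hcon
  push_neg at hcon
  set c := ⟪v, w - v⟫_ℝ with hc
  set M := ‖w - v‖ ^ 2 with hM
  have hMpos : 0 < M := by
    rcases eq_or_ne (w - v) 0 with h0 | h0
    · exfalso
      rw [hc, h0, inner_zero_right] at hcon
      exact lt_irrefl _ hcon
    · have : 0 < ‖w - v‖ := norm_pos_iff.2 h0
      rw [hM]
      positivity
  set θ := min 1 (-c / M) with hθ
  have hθ0 : 0 < θ := lt_min one_pos (div_pos (neg_pos.2 hcon) hMpos)
  have hθ1 : θ ≤ 1 := min_le_left _ _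
  have hmem : (1 - θ) • v + θ • w ∈ K := hK hv hw (by linarith) (le_of_lt hθ0) (by ring)
  have hnorm := hmin _ hmem
  have hexp : ‖(1 - θ) • v + θ • w‖ ^ 2 = ‖v‖ ^ 2 + 2 * θ * c + θ ^ 2 * M := by
    have hvec : (1 - θ) • v + θ • w = v + θ • (w - v) := by
      rw [smul_sub]
      module
    rw [hvec, norm_add_sq_real, real_inner_smul_right, norm_smul, hM]
    simp [mul_pow, sq_abs]
    ring
  have h2 : ‖v‖ ^ 2 ≤ ‖v‖ ^ 2 + 2 * θ * c + θ ^ 2 * M := by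
    rw [← hexp]
    exact pow_le_pow_left₀ (norm_nonneg v) hnorm 2
  have h3 : 0 ≤ 2 * c + θ * M := by nlinarith
  have h4 : θ * M ≤ -c := by
    calc θ * M ≤ (-c / M) * M := mul_le_mul_of_nonneg_right (min_le_right _ _) hMpos.le
      _ = -c := by field_simp
  linarith

end

set_option maxHeartbeats 2000000 in
/-- For a trajectory solution `x` of (MTRIGS) with `q ∈ (0,1)`, `λ > 0`,
`r ∈ [q,1)`, `z ∈ H`, the energy `E` satisfies, with `μ_r(t) = λ/t^r − 2r/t`, for a.e.
`t ≥ t₁ := max((2r/λ)^{1/(1−r)}, t₀)`: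
`E'(t) + μ_r(t)E(t) ≤ t^r((3/2)λ − α t^{r−q})‖ẋ(t)‖² + (pβ t^{2r}/(2t^{p+1}))‖z‖²
+ (λ/2)(3λr/t − λ²/t^r + λα/t^q − β/t^{p−r})‖x(t)−z‖²`. -/
theorem stmt_13
    {H : Type*} [NormedAddCommGroup H] [InnerProductSpace ℝ H] [CompleteSpace H]
    {m : ℕ} (hm : 0 < m) (f : Fin m → H → ℝ)
    (hconv : ∀ i, ConvexOn ℝ Set.univ (f i))
    (hdiff : ∀ i, Differentiable ℝ (f i))
    (hlip : ∀ i, ∃ L : ℝ≥0, LipschitzWith L (gradient (f i)))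
    (t₀ α β q p : ℝ) (ht₀ : 0 < t₀) (hα : 0 < α) (hβ : 0 < β)
    (hq : q ∈ Set.Ioo (0:ℝ) 1) (hp : p ∈ Set.Ioc (0:ℝ) 2)
    (x x' x'' : ℝ → H)
    (hx : ∀ t ∈ Set.Ici t₀, HasDerivAt x (x' t) t)
    (hx'c : ContinuousOn x' (Set.Ici t₀))
    (hx''m : StronglyMeasurable x'')
    (hx'int : ∀ t ∈ Set.Ici t₀, x' t = x' t₀ + ∫ s in t₀..t, x'' s)
    (hx'' : ∀ᵐ t ∂(volume.restrict (Set.Ici t₀)), HasDerivAt x' (x'' t) t)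
    (hMTRIGS : ∀ᵐ t ∂(volume.restrict (Set.Ici t₀)),
      ((-(α / t ^ q)) • x' t ∈
        (fun g => g + (β / t ^ p) • x t + x'' t) ''
          (convexHull ℝ (Set.range fun i => gradient (f i) (x t)))) ∧
      (∀ w ∈ (fun g => g + (β / t ^ p) • x t + x'' t) ''
          (convexHull ℝ (Set.range fun i => gradient (f i) (x t))),
        ‖(α / t ^ q) • x' t‖ ≤ ‖w‖))
    (lam : ℝ) (hlam : 0 < lam) (r : ℝ) (hr : r ∈ Set.Ico q 1) (z : H)
    (E : ℝ → ℝ)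
    (hE : ∀ t : ℝ, E t =
      t ^ (2 * r) * (⨅ i, ((f i (x t) + β / (2 * t ^ p) * ‖x t‖ ^ 2)
          - (f i z + β / (2 * t ^ p) * ‖z‖ ^ 2)))
        + (1/2) * ‖lam • (x t - z) + t ^ r • x' t‖ ^ 2
        + lam / 2 * (r * t ^ (r - 1) + α * t ^ (r - q) - 2 * lam) * ‖x t - z‖ ^ 2) :
    ∀ᵐ t ∂(volume.restrict (Set.Ici (max ((2 * r / lam) ^ ((1:ℝ) / (1 - r))) t₀))),
      ∃ d : ℝ, HasDerivAt E d t ∧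
        d + (lam / t ^ r - 2 * r / t) * E t ≤
          t ^ r * (3 / 2 * lam - α * t ^ (r - q)) * ‖x' t‖ ^ 2
          + p * β * t ^ (2 * r) / (2 * t ^ (p + 1)) * ‖z‖ ^ 2
          + lam / 2 * (3 * lam * r / t - lam ^ 2 / t ^ r + lam * α / t ^ q
              - β / t ^ (p - r)) * ‖x t - z‖ ^ 2 := by
  haveI : Nonempty (Fin m) := ⟨⟨0, hm⟩⟩
  obtain ⟨hq0, hq1⟩ := hq
  obtain ⟨hrq, hr1⟩ := hr
  have hr0 : 0 < r := lt_of_lt_of_le hq0 hrq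
  -- derivative of the composites f i ∘ x
  have hcomp : ∀ (i : Fin m), ∀ t ∈ Set.Ici t₀,
      HasDerivAt (fun s => f i (x s)) ⟪gradient (f i) (x t), x' t⟫_ℝ t := by
    intro i t ht
    have hg := ((hdiff i) (x t)).hasGradientAt.hasFDerivAt
    have h2 := hg.comp_hasDerivAt t (hx t ht)
    exact h2
  -- the countable bad sets
  have hbad : ∀ i j : Fin m, ({t | t ∈ Set.Ici t₀ ∧
      ((f i (x t) - f j (x t)) - (f i z - f j z) = 0) ∧
      (⟪gradient (f i) (x t), x' t⟫_ℝ - ⟪gradient (f j) (x t), x' t⟫_ℝ ≠ 0)}).Countable := by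
    intro i j
    exact aux_countable_zero_deriv
      (u := fun s => (f i (x s) - f j (x s)) - (f i z - f j z))
      (d := fun s => ⟪gradient (f i) (x s), x' s⟫_ℝ - ⟪gradient (f j) (x s), x' s⟫_ℝ)
      (fun t ht => ((hcomp i t ht).sub (hcomp j t ht)).sub_const _)
  have hUnull : volume (⋃ i : Fin m, ⋃ j : Fin m, {t | t ∈ Set.Ici t₀ ∧
      ((f i (x t) - f j (x t)) - (f i z - f j z) = 0) ∧
      (⟪gradient (f i) (x t), x' t⟫_ℝ - ⟪gradient (f j) (x t), x' t⟫_ℝ ≠ 0)}) = 0 :=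
    measure_iUnion_null fun i => measure_iUnion_null fun j => ((hbad i j).measure_zero volume)
  have hae1 : ∀ᵐ t : ℝ ∂volume, t ∉ ⋃ i : Fin m, ⋃ j : Fin m, {t | t ∈ Set.Ici t₀ ∧
      ((f i (x t) - f j (x t)) - (f i z - f j z) = 0) ∧
      (⟪gradient (f i) (x t), x' t⟫_ℝ - ⟪gradient (f j) (x t), x' t⟫_ℝ ≠ 0)} :=
    measure_eq_zero_iff_ae_notMem.mp hUnull
  have hsub : Set.Ici (max ((2 * r / lam) ^ ((1:ℝ) / (1 - r))) t₀) ⊆ Set.Ici t₀ :=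
    Set.Ici_subset_Ici.2 (le_max_right _ _)
  filter_upwards [ae_restrict_mem measurableSet_Ici,
    ae_restrict_of_ae_restrict_of_subset hsub hx'',
    ae_restrict_of_ae_restrict_of_subset hsub hMTRIGS,
    ae_restrict_of_ae hae1] with t htmem htx'' htM htgood
  have ht0 : t ∈ Set.Ici t₀ := hsub htmem
  have htpos : 0 < t := lt_of_lt_of_le ht₀ ht0
  have htne : t ≠ 0 := ne_of_gt htpos
  have hA : 0 < t ^ r := Real.rpow_pos_of_pos htpos r
  have hB : 0 < t ^ q := Real.rpow_pos_of_pos htpos q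
  have hC : 0 < t ^ p := Real.rpow_pos_of_pos htpos p
  -- rpow arithmetic
  have e2r : t ^ (2*r) = t^r * t^r := by
    rw [show (2*r) = r + r by ring, Real.rpow_add htpos]
  have e2r1 : t ^ (2*r-1) = t^r * t^r / t := by
    rw [show (2*r-1) = r + r - 1 by ring, Real.rpow_sub htpos, Real.rpow_add htpos,
      Real.rpow_one]
  have er1 : t ^ (r-1) = t^r / t := by rw [Real.rpow_sub htpos, Real.rpow_one]
  have erq : t ^ (r-q) = t^r / t^q := Real.rpow_sub htpos r q
  have ep1 : t ^ (p+1) = t^p * t := by rw [Real.rpow_add htpos, Real.rpow_one]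
  have epr : t ^ (p-r) = t^p / t^r := Real.rpow_sub htpos p r
  have er11 : t ^ (r-1-1) = t^r / (t*t) := by
    rw [Real.rpow_sub htpos, Real.rpow_sub htpos, Real.rpow_one, div_div]
  have erq1 : t ^ (r-q-1) = t^r / (t^q * t) := by
    rw [Real.rpow_sub htpos, Real.rpow_sub htpos, Real.rpow_one, div_div]
  have ep1' : t ^ (p-1) = t^p / t := by rw [Real.rpow_sub htpos, Real.rpow_one]
  -- MTRIGS data at t
  obtain ⟨⟨g, hghull, hgeq⟩, hminw⟩ := htM
  have hx''eq : x'' t = (-(α / t ^ q)) • x' t - (g + (β / t ^ p) • x t) := by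
    rw [eq_sub_iff_add_eq, ← hgeq]
    abel
  -- projection inequality
  have hKconv : Convex ℝ ((fun y => y + (β / t ^ p) • x t + x'' t) ''
      (convexHull ℝ (Set.range fun i => gradient (f i) (x t)))) := by
    have himg : (fun y => y + (β / t ^ p) • x t + x'' t) ''
        (convexHull ℝ (Set.range fun i => gradient (f i) (x t)))
        = (fun y => ((β / t ^ p) • x t + x'' t) + y) ''
        (convexHull ℝ (Set.range fun i => gradient (f i) (x t))) := by
      apply Set.image_congr
      intro y _
      abel
    rw [himg]
    exact (convex_convexHull ℝ _).translate _
  have hv0K : (-(α / t ^ q)) • x' t ∈ (fun y => y + (β / t ^ p) • x t + x'' t) ''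
      (convexHull ℝ (Set.range fun i => gradient (f i) (x t))) := ⟨g, hghull, hgeq⟩
  have hv0min : ∀ w ∈ (fun y => y + (β / t ^ p) • x t + x'' t) ''
      (convexHull ℝ (Set.range fun i => gradient (f i) (x t))),
      ‖(-(α / t ^ q)) • x' t‖ ≤ ‖w‖ := by
    intro w hw
    rw [neg_smul, norm_neg]
    exact hminw w hw
  have hproj := aux_proj hKconv hv0K hv0min
  have hPle : ∀ i : Fin m, ⟪x' t, gradient (f i) (x t)⟫_ℝ ≤ ⟪x' t, g⟫_ℝ := by
    intro i
    have hwK : gradient (f i) (x t) + (β / t ^ p) • x t + x'' t ∈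
        (fun y => y + (β / t ^ p) • x t + x'' t) ''
        (convexHull ℝ (Set.range fun i => gradient (f i) (x t))) :=
      ⟨gradient (f i) (x t), subset_convexHull ℝ _ ⟨i, rfl⟩, rfl⟩
    have h0 := hproj _ hwK
    have hdw : (gradient (f i) (x t) + (β / t ^ p) • x t + x'' t) - (-(α / t ^ q)) • x' t
        = gradient (f i) (x t) - g := by
      rw [← hgeq]
      beta_reduce
      abel
    rw [hdw, neg_smul, inner_neg_left, real_inner_smul_left, inner_sub_right] at h0
    have hposq : 0 < α / t ^ q := div_pos hα hB
    nlinarith [h0, hposq]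
  -- convex halfspace inequality
  have hhs : convexHull ℝ (Set.range fun i => gradient (f i) (x t)) ⊆
      {y | (⨅ i, (f i (x t) - f i z)) ≤ ⟪y, x t - z⟫_ℝ} := by
    apply convexHull_min
    · rintro y ⟨i, rfl⟩
      have h1 := aux_grad_convex (hconv i) (hdiff i) (x t) z
      have h2 : (⨅ i, (f i (x t) - f i z)) ≤ f i (x t) - f i z :=
        ciInf_le (Set.Finite.bddBelow (Set.finite_range _)) i
      have h3 : ⟪gradient (f i) (x t), z - x t⟫_ℝ
          = -⟪gradient (f i) (x t), x t - z⟫_ℝ := by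
        rw [show z - x t = -(x t - z) by abel, inner_neg_right]
      rw [h3] at h1
      simp only [Set.mem_setOf_eq]
      linarith
    · apply convex_halfSpace_ge
      constructor
      · intro a b
        exact inner_add_left a b _
      · intro c a
        simp [real_inner_smul_left]
  have hΨg : (⨅ i, (f i (x t) - f i z)) ≤ ⟪g, x t - z⟫_ℝ := hhs hghull
  -- value of the infimum decomposition
  have hΦdecomp : (⨅ i, ((f i (x t) + β / (2 * t ^ p) * ‖x t‖ ^ 2)
      - (f i z + β / (2 * t ^ p) * ‖z‖ ^ 2)))
      = (⨅ i, (f i (x t) - f i z)) + β / (2 * t ^ p) * (‖x t‖^2 - ‖z‖^2) := by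
    obtain ⟨i₁, hi₁⟩ := aux_exists_ciInf hm (fun i => f i (x t) - f i z)
    obtain ⟨i₂, hi₂⟩ := aux_exists_ciInf hm (fun i => (f i (x t) + β / (2 * t ^ p) * ‖x t‖ ^ 2)
      - (f i z + β / (2 * t ^ p) * ‖z‖ ^ 2))
    apply le_antisymm
    · have h1 : (⨅ i, ((f i (x t) + β / (2 * t ^ p) * ‖x t‖ ^ 2)
          - (f i z + β / (2 * t ^ p) * ‖z‖ ^ 2)))
          ≤ (f i₁ (x t) + β / (2 * t ^ p) * ‖x t‖ ^ 2) - (f i₁ z + β / (2 * t ^ p) * ‖z‖ ^ 2) :=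
        ciInf_le (Set.Finite.bddBelow (Set.finite_range _)) i₁
      have h2 : f i₁ (x t) - f i₁ z = ⨅ i, (f i (x t) - f i z) := hi₁
      linarith
    · have h1 : (⨅ i, (f i (x t) - f i z)) ≤ f i₂ (x t) - f i₂ z :=
        ciInf_le (Set.Finite.bddBelow (Set.finite_range _)) i₂
      have h2 : (f i₂ (x t) + β / (2 * t ^ p) * ‖x t‖ ^ 2)
          - (f i₂ z + β / (2 * t ^ p) * ‖z‖ ^ 2)
          = ⨅ i, ((f i (x t) + β / (2 * t ^ p) * ‖x t‖ ^ 2)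
          - (f i z + β / (2 * t ^ p) * ‖z‖ ^ 2)) := hi₂
      linarith
  -- the fine version of the convexity inequality
  have hxtz' : ⟪x t - z, x t⟫_ℝ = ‖x t‖^2 - ⟪z, x t⟫_ℝ := by
    rw [inner_sub_left, real_inner_self_eq_norm_sq]
  have hN2' : ‖x t - z‖^2 = ‖x t‖^2 - 2*⟪x t, z⟫_ℝ + ‖z‖^2 := norm_sub_sq_real (x t) z
  have hzx : ⟪z, x t⟫_ℝ = ⟪x t, z⟫_ℝ := real_inner_comm _ _
  have hquad : β / (2 * t ^ p) * (‖x t‖^2 - ‖z‖^2) + β / (2 * t ^ p) * ‖x t - z‖^2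
      = (β / t ^ p) * ⟪x t - z, x t⟫_ℝ := by
    rw [hxtz', hN2', hzx]
    field_simp
    ring
  have hgxtz : ⟪g, x t - z⟫_ℝ = ⟪x t - z, g⟫_ℝ := real_inner_comm _ _
  have hGafine : (⨅ i, ((f i (x t) + β / (2 * t ^ p) * ‖x t‖ ^ 2)
      - (f i z + β / (2 * t ^ p) * ‖z‖ ^ 2))) + β / (2 * t ^ p) * ‖x t - z‖^2
      ≤ ⟪x t - z, g⟫_ℝ + (β / t ^ p) * ⟪x t - z, x t⟫_ℝ := by
    rw [hΦdecomp]
    rw [hgxtz] at hΨg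
    linarith [hquad]
  -- derivative of the coefficient function
  have h2C : (0:ℝ) < 2 * t ^ p := by linarith
  have hcder : HasDerivAt (fun s : ℝ => β / (2 * s ^ p)) (-(β * p) / (2 * (t ^ p * t))) t := by
    have h1 : HasDerivAt (fun s : ℝ => 2 * s ^ p) (2 * (p * t ^ (p-1))) t :=
      (Real.hasDerivAt_rpow_const (Or.inl htne)).const_mul 2
    have h2 := (hasDerivAt_const t β).div h1 (ne_of_gt h2C)
    refine HasDerivAt.congr_deriv h2 (Eq.symm ?_)
    try simp only []
    rw [ep1']
    field_simp
    ring
  have hnormsq : ∀ (y : ℝ → H) (y' : H), HasDerivAt y y' t →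
      HasDerivAt (fun s => ‖y s‖^2) (2 * ⟪y t, y'⟫_ℝ) t := by
    intro y y' hy
    have h := HasDerivAt.inner (𝕜 := ℝ) hy hy
    simp only [real_inner_self_eq_norm_sq] at h
    refine HasDerivAt.congr_deriv h (Eq.symm ?_)
    rw [real_inner_comm]
    ring
  have hxder := hx t ht0
  have hX2der : HasDerivAt (fun s => ‖x s‖^2) (2 * ⟪x t, x' t⟫_ℝ) t := hnormsq x (x' t) hxder
  -- derivative of each branch of the min
  have hgider : ∀ i : Fin m, HasDerivAt
      (fun s => (f i (x s) + β / (2 * s ^ p) * ‖x s‖ ^ 2) - (f i z + β / (2 * s ^ p) * ‖z‖ ^ 2))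
      (⟪gradient (f i) (x t), x' t⟫_ℝ + ((-(β * p) / (2 * (t ^ p * t))) * ‖x t‖^2
        + β / (2 * t ^ p) * (2 * ⟪x t, x' t⟫_ℝ)) - (-(β * p) / (2 * (t ^ p * t))) * ‖z‖^2) t := by
    intro i
    have h1 := (hcomp i t ht0).add (hcder.mul hX2der)
    have h2 := (hasDerivAt_const t (f i z)).add (hcder.mul_const (‖z‖^2))
    have h3 := h1.sub h2
    refine HasDerivAt.congr_deriv h3 (Eq.symm ?_)
    try simp only []
    ring
  -- an active index
  obtain ⟨i₀, hi₀⟩ := aux_exists_ciInf hm (fun i =>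
    (f i (x t) + β / (2 * t ^ p) * ‖x t‖ ^ 2) - (f i z + β / (2 * t ^ p) * ‖z‖ ^ 2))
  -- all active indices share the derivative
  have hactive : ∀ i : Fin m,
      (fun i s => (f i (x s) + β / (2 * s ^ p) * ‖x s‖ ^ 2)
        - (f i z + β / (2 * s ^ p) * ‖z‖ ^ 2)) i t
      = (⨅ j, (fun i s => (f i (x s) + β / (2 * s ^ p) * ‖x s‖ ^ 2)
        - (f i z + β / (2 * s ^ p) * ‖z‖ ^ 2)) j t) →
      (fun i => ⟪gradient (f i) (x t), x' t⟫_ℝ + ((-(β * p) / (2 * (t ^ p * t))) * ‖x t‖^2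
        + β / (2 * t ^ p) * (2 * ⟪x t, x' t⟫_ℝ)) - (-(β * p) / (2 * (t ^ p * t))) * ‖z‖^2) i
      = (fun i => ⟪gradient (f i) (x t), x' t⟫_ℝ + ((-(β * p) / (2 * (t ^ p * t))) * ‖x t‖^2
        + β / (2 * t ^ p) * (2 * ⟪x t, x' t⟫_ℝ)) - (-(β * p) / (2 * (t ^ p * t))) * ‖z‖^2) i₀ := by
    intro i hi
    try simp only [] at hi ⊢
    have heqf : f i (x t) - f i z = f i₀ (x t) - f i₀ z := by
      have h1 : (f i (x t) + β / (2 * t ^ p) * ‖x t‖ ^ 2)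
          - (f i z + β / (2 * t ^ p) * ‖z‖ ^ 2)
          = (f i₀ (x t) + β / (2 * t ^ p) * ‖x t‖ ^ 2)
          - (f i₀ z + β / (2 * t ^ p) * ‖z‖ ^ 2) := by
        rw [hi, ← hi₀]
      linarith
    have hnb : t ∉ ⋃ i' : Fin m, ⋃ j : Fin m, {t | t ∈ Set.Ici t₀ ∧
        ((f i' (x t) - f j (x t)) - (f i' z - f j z) = 0) ∧
        (⟪gradient (f i') (x t), x' t⟫_ℝ - ⟪gradient (f j) (x t), x' t⟫_ℝ ≠ 0)} := htgood
    simp only [Set.mem_iUnion, Set.mem_setOf_eq, not_exists] at hnb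
    have hnij := hnb i i₀
    have hd0 : ⟪gradient (f i) (x t), x' t⟫_ℝ - ⟪gradient (f i₀) (x t), x' t⟫_ℝ = 0 := by
      by_contra hne
      exact hnij ⟨ht0, by linarith, hne⟩
    linarith
  have hΦder : HasDerivAt (fun s => ⨅ j, ((f j (x s) + β / (2 * s ^ p) * ‖x s‖ ^ 2)
      - (f j z + β / (2 * s ^ p) * ‖z‖ ^ 2)))
      (⟪gradient (f i₀) (x t), x' t⟫_ℝ + ((-(β * p) / (2 * (t ^ p * t))) * ‖x t‖^2
        + β / (2 * t ^ p) * (2 * ⟪x t, x' t⟫_ℝ)) - (-(β * p) / (2 * (t ^ p * t))) * ‖z‖^2) t := by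
    exact aux_min_hasDerivAt hm
      (fun i s => (f i (x s) + β / (2 * s ^ p) * ‖x s‖ ^ 2)
        - (f i z + β / (2 * s ^ p) * ‖z‖ ^ 2))
      (fun i => ⟪gradient (f i) (x t), x' t⟫_ℝ + ((-(β * p) / (2 * (t ^ p * t))) * ‖x t‖^2
        + β / (2 * t ^ p) * (2 * ⟪x t, x' t⟫_ℝ)) - (-(β * p) / (2 * (t ^ p * t))) * ‖z‖^2)
      t hgider _ hactive
  -- rpow derivatives
  have hrder : HasDerivAt (fun s : ℝ => s ^ r) (r * t ^ (r-1)) t :=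
    Real.hasDerivAt_rpow_const (Or.inl htne)
  have h2rder : HasDerivAt (fun s : ℝ => s ^ (2*r)) ((2*r) * t ^ (2*r-1)) t :=
    Real.hasDerivAt_rpow_const (Or.inl htne)
  have hr1der : HasDerivAt (fun s : ℝ => s ^ (r-1)) ((r-1) * t ^ (r-1-1)) t :=
    Real.hasDerivAt_rpow_const (Or.inl htne)
  have hrqder : HasDerivAt (fun s : ℝ => s ^ (r-q)) ((r-q) * t ^ (r-q-1)) t :=
    Real.hasDerivAt_rpow_const (Or.inl htne)
  refine ⟨(2 * r * t ^ (2*r-1) * (⨅ i, ((f i (x t) + β / (2 * t ^ p) * ‖x t‖ ^ 2) - (f i z + β / (2 * t ^ p) * ‖z‖ ^ 2))) + t ^ (2*r) * (⟪gradient (f i₀) (x t), x' t⟫_ℝ + ((-(β * p) / (2 * (t ^ p * t))) * ‖x t‖^2 + β / (2 * t ^ p) * (2 * ⟪x t, x' t⟫_ℝ)) - (-(β * p) / (2 * (t ^ p * t))) * ‖z‖^2)) + (⟪lam • (x t - z) + t ^ r • x' t, lam • x' t + (t ^ r • x'' t + (r * t ^ (r-1)) • x' t)⟫_ℝ) + (lam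 / 2 * (r * ((r-1) * t ^ (r-1-1)) + α * ((r-q) * t ^ (r-q-1))) * ‖x t - z‖^2 + lam / 2 * (r * t ^ (r-1) + α * t ^ (r-q) - 2*lam) * (2 * ⟪x t - z, x' t⟫_ℝ)), ?_, ?_⟩
  · -- differentiability of E at t
    have hEeq : E = fun s => s ^ (2 * r) * (⨅ i, ((f i (x s) + β / (2 * s ^ p) * ‖x s‖ ^ 2)
        - (f i z + β / (2 * s ^ p) * ‖z‖ ^ 2)))
        + (1/2) * ‖lam • (x s - z) + s ^ r • x' s‖ ^ 2
        + lam / 2 * (r * s ^ (r - 1) + α * s ^ (r - q) - 2 * lam) * ‖x s - z‖ ^ 2 := funext hE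
    rw [hEeq]
    have hd1 : HasDerivAt (fun s : ℝ => s ^ (2 * r) * (⨅ i, ((f i (x s) + β / (2 * s ^ p) * ‖x s‖ ^ 2)
        - (f i z + β / (2 * s ^ p) * ‖z‖ ^ 2)))) (2 * r * t ^ (2*r-1) * (⨅ i, ((f i (x t) + β / (2 * t ^ p) * ‖x t‖ ^ 2) - (f i z + β / (2 * t ^ p) * ‖z‖ ^ 2))) + t ^ (2*r) * (⟪gradient (f i₀) (x t), x' t⟫_ℝ + ((-(β * p) / (2 * (t ^ p * t))) * ‖x t‖^2 + β / (2 * t ^ p) * (2 * ⟪x t, x' t⟫_ℝ)) - (-(β * p) / (2 * (t ^ p * t))) * ‖z‖^2)) t := by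
      refine HasDerivAt.congr_deriv (h2rder.mul hΦder) (Eq.symm ?_)
      try simp only []
      try ring
    have hvder : HasDerivAt (fun s => lam • (x s - z) + s ^ r • x' s)
        (lam • x' t + (t ^ r • x'' t + (r * t ^ (r-1)) • x' t)) t :=
      ((hxder.sub_const z).const_smul lam).add (hrder.smul htx'')
    have hd2 : HasDerivAt (fun s : ℝ => (1/2) * ‖lam • (x s - z) + s ^ r • x' s‖ ^ 2) (⟪lam • (x t - z) + t ^ r • x' t, lam • x' t + (t ^ r • x'' t + (r * t ^ (r-1)) • x' t)⟫_ℝ) t := by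
      have h := (hnormsq (fun s => lam • (x s - z) + s ^ r • x' s) _ hvder).const_mul (1/2:ℝ)
      refine HasDerivAt.congr_deriv h (Eq.symm ?_)
      try simp only []
      try ring
    have hγder : HasDerivAt (fun s : ℝ => r * s ^ (r-1) + α * s ^ (r-q) - 2*lam)
        (r * ((r-1) * t ^ (r-1-1)) + α * ((r-q) * t ^ (r-q-1))) t :=
      ((hr1der.const_mul r).add (hrqder.const_mul α)).sub_const (2*lam)
    have hN2der : HasDerivAt (fun s => ‖x s - z‖^2) (2 * ⟪x t - z, x' t⟫_ℝ) t :=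
      hnormsq (fun s => x s - z) (x' t) (hxder.sub_const z)
    have hd3 : HasDerivAt (fun s : ℝ => lam / 2 * (r * s ^ (r - 1) + α * s ^ (r - q) - 2 * lam)
        * ‖x s - z‖ ^ 2) (lam / 2 * (r * ((r-1) * t ^ (r-1-1)) + α * ((r-q) * t ^ (r-q-1))) * ‖x t - z‖^2 + lam / 2 * (r * t ^ (r-1) + α * t ^ (r-q) - 2*lam) * (2 * ⟪x t - z, x' t⟫_ℝ)) t := by
      have h := (hγder.const_mul (lam/2)).mul hN2der
      refine HasDerivAt.congr_deriv h (Eq.symm ?_)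
      try simp only []
      try ring
    exact (hd1.add hd2).add hd3
  · -- the energy inequality
    have hAne := hA.ne'
    have hBne := hB.ne'
    have hCne := hC.ne'
    have hvt2 : ‖lam • (x t - z) + t ^ r • x' t‖^2
        = lam*lam*‖x t - z‖^2 + 2*lam*(t^r)*⟪x t - z, x' t⟫_ℝ + t^r*t^r*‖x' t‖^2 := by
      rw [norm_add_sq_real, norm_smul, norm_smul, real_inner_smul_left, real_inner_smul_right,
        Real.norm_eq_abs, Real.norm_eq_abs, abs_of_pos hlam, abs_of_pos hA]
      ring
    have hxxs : ⟪x' t, x t⟫_ℝ = ⟪x t, x' t⟫_ℝ := real_inner_comm _ _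
    have hvd : (⟪lam • (x t - z) + t ^ r • x' t, lam • x' t + (t ^ r • x'' t + (r * t ^ (r-1)) • x' t)⟫_ℝ)
        = (lam + r * (t^r/t) - α * (t^r/t^q)) * (lam * ⟪x t - z, x' t⟫_ℝ + t^r * ‖x' t‖^2)
          - t^r * (lam * (⟪x t - z, g⟫_ℝ + (β/t^p) * ⟪x t - z, x t⟫_ℝ)
            + t^r * (⟪x' t, g⟫_ℝ + (β/t^p) * ⟪x' t, x t⟫_ℝ)) := by
      rw [hx''eq, er1]
      simp only [inner_add_left, inner_add_right, inner_sub_right, real_inner_smul_left,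
        real_inner_smul_right, real_inner_self_eq_norm_sq]
      ring
    have hPa4 : ⟪gradient (f i₀) (x t), x' t⟫_ℝ ≤ ⟪x' t, g⟫_ℝ := by
      have hc : ⟪gradient (f i₀) (x t), x' t⟫_ℝ = ⟪x' t, gradient (f i₀) (x t)⟫_ℝ :=
        real_inner_comm _ _
      rw [hc]
      exact hPle i₀
    have hS1 : (lam * t^r * (⨅ i, ((f i (x t) + β / (2 * t ^ p) * ‖x t‖ ^ 2) - (f i z + β / (2 * t ^ p) * ‖z‖ ^ 2))) - lam * t^r * (⟪x t - z, g⟫_ℝ + (β/t^p) * ⟪x t - z, x t⟫_ℝ) + lam * t^r * (β/(2*t^p)) * ‖x t - z‖^2) ≤ 0 := by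
      have h := mul_le_mul_of_nonneg_left hGafine (le_of_lt (mul_pos hlam hA))
      have he : (lam * t^r * (⨅ i, ((f i (x t) + β / (2 * t ^ p) * ‖x t‖ ^ 2) - (f i z + β / (2 * t ^ p) * ‖z‖ ^ 2))) - lam * t^r * (⟪x t - z, g⟫_ℝ + (β/t^p) * ⟪x t - z, x t⟫_ℝ) + lam * t^r * (β/(2*t^p)) * ‖x t - z‖^2) = lam * t^r * ((⨅ i, ((f i (x t) + β / (2 * t ^ p) * ‖x t‖ ^ 2) - (f i z + β / (2 * t ^ p) * ‖z‖ ^ 2))) + β / (2 * t ^ p) * ‖x t - z‖^2)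
          - lam * t^r * (⟪x t - z, g⟫_ℝ + (β/t^p) * ⟪x t - z, x t⟫_ℝ) := by ring
      rw [he]
      exact sub_nonpos.mpr h
    have hS2 : (t^r * t^r * (⟪gradient (f i₀) (x t), x' t⟫_ℝ - ⟪x' t, g⟫_ℝ)) ≤ 0 :=
      mul_nonpos_of_nonneg_of_nonpos (le_of_lt (mul_pos hA hA)) (sub_nonpos.mpr hPa4)
    have hden : (0:ℝ) < 2 * (t^p * t) := mul_pos (by norm_num) (mul_pos hC htpos)
    have hS3 : (t^r * t^r * (-(β * p) / (2 * (t ^ p * t))) * ‖x t‖^2) ≤ 0 := by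
      have h31 : 0 ≤ t^r * t^r * ((β * p) / (2 * (t ^ p * t))) * ‖x t‖^2 :=
        mul_nonneg (mul_nonneg (mul_nonneg hA.le hA.le)
          (div_nonneg (mul_nonneg hβ.le hp.1.le) hden.le)) (sq_nonneg _)
      have he : (t^r * t^r * (-(β * p) / (2 * (t ^ p * t))) * ‖x t‖^2) = -(t^r * t^r * ((β * p) / (2 * (t ^ p * t))) * ‖x t‖^2) := by ring
      rw [he]
      exact neg_nonpos.mpr h31
    have hS4 : (lam / 2 * (-(r*(r+1)*t^r/(t*t)) - α*(r+q)*t^r/(t^q*t)) * ‖x t - z‖^2) ≤ 0 := by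
      have hc1 : 0 ≤ r*(r+1)*t^r/(t*t) :=
        div_nonneg (mul_nonneg (mul_nonneg hr0.le (add_nonneg hr0.le zero_le_one)) hA.le)
          (le_of_lt (mul_pos htpos htpos))
      have hc2 : 0 ≤ α*(r+q)*t^r/(t^q*t) :=
        div_nonneg (mul_nonneg (mul_nonneg hα.le (add_nonneg hr0.le hq0.le)) hA.le)
          (le_of_lt (mul_pos hB htpos))
      have h41 : 0 ≤ lam / 2 * ((r*(r+1)*t^r/(t*t)) + α*(r+q)*t^r/(t^q*t)) * ‖x t - z‖^2 :=
        mul_nonneg (mul_nonneg (div_nonneg hlam.le (by norm_num)) (add_nonneg hc1 hc2)) (sq_nonneg _)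
      have he : (lam / 2 * (-(r*(r+1)*t^r/(t*t)) - α*(r+q)*t^r/(t^q*t)) * ‖x t - z‖^2) = -(lam / 2 * ((r*(r+1)*t^r/(t*t)) + α*(r+q)*t^r/(t^q*t)) * ‖x t - z‖^2) := by
        ring
      rw [he]
      exact neg_nonpos.mpr h41
    have heq : (2 * r * t ^ (2*r-1) * (⨅ i, ((f i (x t) + β / (2 * t ^ p) * ‖x t‖ ^ 2) - (f i z + β / (2 * t ^ p) * ‖z‖ ^ 2))) + t ^ (2*r) * (⟪gradient (f i₀) (x t), x' t⟫_ℝ + ((-(β * p) / (2 * (t ^ p * t))) * ‖x t‖^2 + β / (2 * t ^ p) * (2 * ⟪x t, x' t⟫_ℝ)) - (-(β * p) / (2 * (t ^ p * t))) * ‖z‖^2)) + (⟪lam • (x t - z) + t ^ r • x' t, lam • x' t + (t ^ r • x'' t + (r * t ^ (r-1)) • x' t)⟫_ℝ) + (lam / 2 * (r * ((r-1) * t ^ (r-1-1)) + α * ((r-q) * t ^ (r-q-1))) * ‖x t - z‖^2 + lam / 2 * (r * t ^ (r-1) + α * t ^ (r-q) - 2*lam) * (2 * ⟪x t - z, x'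 t⟫_ℝ)) + (lam / t ^ r - 2 * r / t) * E t
        = (t ^ r * (3 / 2 * lam - α * t ^ (r - q)) * ‖x' t‖ ^ 2 + p * β * t ^ (2 * r) / (2 * t ^ (p + 1)) * ‖z‖ ^ 2 + lam / 2 * (3 * lam * r / t - lam ^ 2 / t ^ r + lam * α / t ^ q - β / t ^ (p - r)) * ‖x t - z‖ ^ 2) + (lam * t^r * (⨅ i, ((f i (x t) + β / (2 * t ^ p) * ‖x t‖ ^ 2) - (f i z + β / (2 * t ^ p) * ‖z‖ ^ 2))) - lam * t^r * (⟪x t - z, g⟫_ℝ + (β/t^p) * ⟪x t - z, x t⟫_ℝ) + lam * t^r * (β/(2*t^p)) * ‖x t - z‖^2) + (t^r * t^r * (⟪gradient (f i₀) (x t), x' t⟫_ℝ - ⟪x' t, g⟫_ℝ)) + (t^r * t^r * (-(β * p) / (2 * (t ^ p * t))) * ‖x t‖^2) + (lam / 2 * (-(r*(r+1)*t^r/(t*t)) - α*(r+q)*t^r/(t^q*t)) * ‖x t - z‖^2) := by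
      rw [hE t, hvd, hvt2, hxxs, e2r, e2r1, er1, erq, ep1, epr, er11, erq1]
      generalize (⨅ i, ((f i (x t) + β / (2 * t ^ p) * ‖x t‖ ^ 2) - (f i z + β / (2 * t ^ p) * ‖z‖ ^ 2))) = Φ
      field_simp
      ring
    rw [heq]
    have hfin := add_le_add (add_le_add (add_le_add (add_le_add
      (le_refl (t ^ r * (3 / 2 * lam - α * t ^ (r - q)) * ‖x' t‖ ^ 2 + p * β * t ^ (2 * r) / (2 * t ^ (p + 1)) * ‖z‖ ^ 2 + lam / 2 * (3 * lam * r / t - lam ^ 2 / t ^ r + lam * α / t ^ q - β / t ^ (p - r)) * ‖x t - z‖ ^ 2)) hS1) hS2) hS3) hS4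
    simpa using hfin
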